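/- Let n be a finite-dimensional non-abelian nilpotent Lie algebra over a field F of characteristic zero which is generated (as a Lie algebra) by two elements. Then n admits a local automorphism which is not an automorphism. -/
import Mathlib

section Helpers

variable {F : Type*} [Field F] {L : Type*} [AddCommGroup L] [Module F L]

/-- Coordinate functional relative to a hyperplane-type decomposition. -/
lemma exists_coord (U : Submodule F L) (v : L) (hv : v ∉ U)
    (hspan : U ⊔ Submodule.span F {v} = ⊤) :
    ∃ f : L →ₗ[F] F, f v = 1 ∧ (∀ u ∈ U, f u = 0) ∧ ∀ a, a - f a • v ∈ U := by
  set π := U.mkQ with hπ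
  have hv' : π v ≠ 0 := by
    simpa [hπ, Submodule.Quotient.mk_eq_zero] using hv
  have hmapU : Submodule.map π U = ⊥ := by
    rw [Submodule.eq_bot_iff]
    rintro r ⟨u, hu, rfl⟩
    simpa [hπ, Submodule.Quotient.mk_eq_zero] using hu
  have hspan' : Submodule.span F {π v} = ⊤ := by
    have h1 : Submodule.map π (U ⊔ Submodule.span F {v}) = ⊤ := by
      rw [hspan, Submodule.map_top, Submodule.range_mkQ]
    rwa [Submodule.map_sup, hmapU, bot_sup_eq, Submodule.map_span, Set.image_singleton] at h1
  set e := LinearMap.toSpanSingleton F (L ⧸ U) (π v) with he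
  have hinj : Function.Injective e := by
    intro s t hst
    have : (s - t) • π v = 0 := by
      rw [sub_smul]
      simpa [he, LinearMap.toSpanSingleton_apply] using sub_eq_zero_of_eq hst
    rcases smul_eq_zero.mp this with h | h
    · exact sub_eq_zero.mp h
    · exact absurd h hv'
  have hsurj : Function.Surjective e := by
    intro r
    have hr : r ∈ Submodule.span F {π v} := by rw [hspan']; trivial
    rcases Submodule.mem_span_singleton.mp hr with ⟨t, ht⟩
    exact ⟨t, by simpa [he, LinearMap.toSpanSingleton_apply] using ht⟩
  set E := LinearEquiv.ofBijective e ⟨hinj, hsurj⟩ with hE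
  refine ⟨(E.symm : (L ⧸ U) →ₗ[F] F).comp π, ?_, ?_, ?_⟩
  · have h1 : E 1 = π v := by
      show e 1 = π v
      simp [he, LinearMap.toSpanSingleton_apply]
    show E.symm (π v) = 1
    rw [← h1, E.symm_apply_apply]
  · intro u hu
    have : π u = 0 := by simpa [hπ, Submodule.Quotient.mk_eq_zero] using hu
    simp [this]
  · intro a
    have h2 : E (E.symm (π a)) = π a := E.apply_symm_apply _
    have hts : ∀ t : F, E t = t • π v := fun t => by
      show e t = t • π v
      simp [he, LinearMap.toSpanSingleton_apply]
    have h3 : (E.symm (π a)) • π v = π a := by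
      rw [← hts, h2]
    have h4 : π (a - (E.symm (π a)) • v) = 0 := by
      rw [map_sub, map_smul]
      show π a - (E.symm (π a)) • π v = 0
      rw [h3, sub_self]
    rw [show ((E.symm : (L ⧸ U) →ₗ[F] F).comp π) a = E.symm (π a) from rfl]
    rw [← Submodule.Quotient.mk_eq_zero U]
    simpa [hπ, Submodule.mkQ_apply] using h4

end Helpers

section Helpers2

variable {F : Type*} [Field F] {L : Type*} [LieRing L] [LieAlgebra F L] [Module.Finite F L]

/-- Build a Lie algebra automorphism of the form `id + D`. -/
lemma exists_aut (D : L →ₗ[F] L)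
    (hder : ∀ a b : L, D ⁅a, b⁆ = ⁅D a, b⁆ + ⁅a, D b⁆)
    (hcomm : ∀ a b : L, ⁅D a, D b⁆ = 0)
    (hinj : ∀ a : L, a + D a = 0 → a = 0) :
    ∃ φ : L ≃ₗ⁅F⁆ L, ∀ a, φ a = a + D a := by
  set T : L →ₗ[F] L := LinearMap.id + D with hT
  have hTa : ∀ a, T a = a + D a := fun a => rfl
  have hinj' : Function.Injective T := by
    rw [← LinearMap.ker_eq_bot]
    rw [Submodule.eq_bot_iff]
    intro a ha
    exact hinj a (by simpa [hTa] using ha)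
  have hsurj : Function.Surjective T := LinearMap.injective_iff_surjective.mp hinj'
  let ψ : L →ₗ⁅F⁆ L :=
    { T with
      map_lie' := by
        intro a b
        show T ⁅a, b⁆ = ⁅T a, T b⁆
        rw [hTa, hTa, hTa, hder, add_lie, lie_add, lie_add, hcomm]
        abel }
  refine ⟨LieEquiv.ofBijective ψ ⟨hinj', hsurj⟩, fun a => rfl⟩

end Helpers2

/-- Every finite-dimensional non-abelian nilpotent Lie algebra over a field of
characteristic zero which is generated by two elements admits a local automorphism
which is not an automorphism. -/
theorem stmt_18 (F : Type*) [Field F] [CharZero F]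
    (L : Type*) [LieRing L] [LieAlgebra F L] [Module.Finite F L]
    (hnilp : ∃ k : ℕ, LieModule.lowerCentralSeries F L L k = ⊥)
    (hnonab : ∃ x y : L, ⁅x, y⁆ ≠ 0)
    (hgen : ∃ x y : L, LieSubalgebra.lieSpan F L {x, y} = ⊤) :
    ∃ T : L →ₗ[F] L,
      (∀ x : L, ∃ φ : L ≃ₗ⁅F⁆ L, T x = φ x) ∧
      ¬ (Function.Bijective T ∧ ∀ x y : L, T ⁅x, y⁆ = ⁅T x, T y⁆) := by
  classical
  obtain ⟨x, y, hgen⟩ := hgen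
  set N : ℕ → LieSubmodule F L L := fun k => LieModule.lowerCentralSeries F L L k with hNdef
  have hNs : ∀ k, N (k + 1) = ⁅(⊤ : LieIdeal F L), N k⁆ := fun k => by
    rw [hNdef]; exact LieModule.lowerCentralSeries_succ F L L k
  have hNanti : ∀ {i j : ℕ}, i ≤ j → N j ≤ N i := fun {i j} h => by
    rw [hNdef]; exact LieModule.antitone_lowerCentralSeries F L L h
  set q : L := ⁅x, y⁆ with hqdef
  -- all brackets lie in N 1, etc.
  have hbrN1 : ∀ a b : L, ⁅a, b⁆ ∈ N 1 := by
    intro a b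
    rw [hNs 0]
    exact LieSubmodule.lie_mem_lie (LieSubmodule.mem_top a) (LieSubmodule.mem_top b)
  have hbrN2 : ∀ (a : L) {c : L}, c ∈ N 1 → ⁅a, c⁆ ∈ N 2 := by
    intro a c hc
    rw [hNs 1]
    exact LieSubmodule.lie_mem_lie (LieSubmodule.mem_top a) hc
  have hbrN2' : ∀ {c : L}, c ∈ N 1 → ∀ a : L, ⁅c, a⁆ ∈ N 2 := by
    intro c hc a
    rw [← lie_skew]
    exact neg_mem (hbrN2 a hc)
  -- a closure principle: subalgebras containing x and y are everything
  have subalg : ∀ U : Submodule F L, (∀ a ∈ U, ∀ b ∈ U, ⁅a, b⁆ ∈ U) →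
      x ∈ U → y ∈ U → ∀ c : L, c ∈ U := by
    intro U hU hx hy c
    let S : LieSubalgebra F L := { U with lie_mem' := fun ha hb => hU _ ha _ hb }
    have hle : LieSubalgebra.lieSpan F L {x, y} ≤ S := by
      rw [LieSubalgebra.lieSpan_le]
      rintro t (rfl | rfl)
      · exact hx
      · exact hy
    rw [hgen] at hle
    exact hle trivial
  -- q ≠ 0
  have hq0 : q ≠ 0 := by
    intro h
    obtain ⟨a, b, hab⟩ := hnonab
    have hxy0 : ⁅x, y⁆ = (0 : L) := by rw [← hqdef]; exact h
    have hyx0 : ⁅y, x⁆ = (0 : L) := by rw [← lie_skew, hxy0, neg_zero]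
    have hsub : ∀ c ∈ Submodule.span F ({x, y} : Set L),
        ∀ d ∈ Submodule.span F ({x, y} : Set L), ⁅c, d⁆ = 0 := by
      intro c hc d hd
      obtain ⟨α, β, rfl⟩ := Submodule.mem_span_pair.mp hc
      obtain ⟨γ, δ, rfl⟩ := Submodule.mem_span_pair.mp hd
      simp [lie_add, add_lie, lie_smul, smul_lie, lie_self, hxy0, hyx0]
    have htop := subalg (Submodule.span F ({x, y} : Set L))
      (fun c hc d hd => by rw [hsub c hc d hd]; exact zero_mem _)
      (Submodule.subset_span (by simp)) (Submodule.subset_span (by simp))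
    exact hab (hsub a (htop a) b (htop b))
  have hqN1 : q ∈ N 1 := hbrN1 x y
  -- the top index m
  have hex : ∃ k, N k = ⊥ := hnilp
  set m : ℕ := Nat.find hex - 1 with hmdef
  have hfind : N (Nat.find hex) = ⊥ := Nat.find_spec hex
  have hfind2 : 2 ≤ Nat.find hex := by
    by_contra h
    push_neg at h
    have h1 : N 1 ≤ N (Nat.find hex) := hNanti (by omega)
    rw [hfind] at h1
    exact hq0 ((LieSubmodule.mem_bot q).mp (h1 hqN1))
  have hm1 : 1 ≤ m := by omega
  have hNm1 : N (m + 1) = ⊥ := by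
    rw [show m + 1 = Nat.find hex by omega]
    exact hfind
  have hNmne : N m ≠ ⊥ := Nat.find_min hex (by omega)
  have hbot : ∀ {w : L}, w ∈ N (m + 1) → w = 0 := by
    intro w hw
    rw [hNm1] at hw
    exact (LieSubmodule.mem_bot w).mp hw
  -- general bracket estimate
  have brk : ∀ i, ∀ u ∈ N i, ∀ j, ∀ c ∈ N j, ⁅u, c⁆ ∈ N (i + j + 1) := by
    intro i
    induction i with
    | zero =>
      intro u _ j c hc
      rw [show 0 + j + 1 = j + 1 by omega, hNs j]
      exact LieSubmodule.lie_mem_lie (LieSubmodule.mem_top u) hc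
    | succ i ih =>
      intro u hu
      have hu' : u ∈ Submodule.span F
          {w : L | ∃ z ∈ (⊤ : LieIdeal F L), ∃ n ∈ N i, ⁅z, n⁆ = w} := by
        have h1 : u ∈ (⁅(⊤ : LieIdeal F L), N i⁆ : LieSubmodule F L L) := by
          rw [← hNs i]; exact hu
        have h2 := (LieSubmodule.mem_toSubmodule
          (N := (⁅(⊤ : LieIdeal F L), N i⁆ : LieSubmodule F L L))).mpr h1
        rwa [LieSubmodule.lieIdeal_oper_eq_linear_span'] at h2
      refine Submodule.span_induction
        (p := fun w _ => ∀ j, ∀ c ∈ N j, ⁅w, c⁆ ∈ N (i + 1 + j + 1)) ?_ ?_ ?_ ?_ hu'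
      · rintro w ⟨z, -, n, hn, rfl⟩ j c hc
        rw [lie_lie]
        refine sub_mem ?_ ?_
        · have t1 : ⁅n, c⁆ ∈ N (i + j + 1) := ih n hn j c hc
          rw [show i + 1 + j + 1 = (i + j + 1) + 1 by omega, hNs]
          exact LieSubmodule.lie_mem_lie (LieSubmodule.mem_top z) t1
        · have t2 : ⁅z, c⁆ ∈ N (j + 1) := by
            rw [hNs j]
            exact LieSubmodule.lie_mem_lie (LieSubmodule.mem_top z) hc
          have t3 := ih n hn (j + 1) _ t2
          rwa [show i + (j + 1) + 1 = i + 1 + j + 1 by omega] at t3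
      · intro j c hc
        rw [zero_lie]
        exact zero_mem _
      · intro w1 w2 _ _ h1 h2 j c hc
        rw [add_lie]
        exact add_mem (h1 j c hc) (h2 j c hc)
      · intro t w _ h1 j c hc
        rw [smul_lie]
        exact SMulMemClass.smul_mem t (h1 j c hc)
  -- centrality of N m
  have hcent : ∀ {w : L}, w ∈ N m → ∀ a : L, ⁅a, w⁆ = 0 := by
    intro w hw a
    apply hbot
    rw [hNs m]
    exact LieSubmodule.lie_mem_lie (LieSubmodule.mem_top a) hw
  have hcent' : ∀ {w : L}, w ∈ N m → ∀ a : L, ⁅w, a⁆ = 0 := by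
    intro w hw a
    rw [← lie_skew, hcent hw a, neg_zero]
  have hum1 : ∀ {u : L}, u ∈ N (m - 1) → ∀ {c : L}, c ∈ N 1 → ⁅u, c⁆ = 0 := by
    intro u hu c hc
    apply hbot
    have h1 := brk (m - 1) u hu 1 c hc
    rwa [show m - 1 + 1 + 1 = m + 1 by omega] at h1
  -- collapse lemma
  have hcollapse : ¬ (N 1 ≤ N 2) := by
    intro h
    have h1 : ∀ k, N 1 ≤ N (k + 1) := by
      intro k
      induction k with
      | zero => exact le_rfl
      | succ k ih =>
        calc N 1 ≤ N 2 := h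
        _ = ⁅(⊤ : LieIdeal F L), N 1⁆ := hNs 1
        _ ≤ ⁅(⊤ : LieIdeal F L), N (k + 1)⁆ := LieSubmodule.mono_lie_right _ ih
        _ = N (k + 2) := (hNs (k + 1)).symm
    have h2 := h1 m hqN1
    exact hq0 (hbot h2)
  -- submodule versions of N 1 and N 2
  have hN0 : N 0 = ⊤ := by rw [hNdef]; exact LieModule.lowerCentralSeries_zero F L L
  set N1 : Submodule F L := LieSubmodule.toSubmodule (N 1) with hN1def
  set N2 : Submodule F L := LieSubmodule.toSubmodule (N 2) with hN2def
  have hmemN1 : ∀ {c : L}, c ∈ N1 ↔ c ∈ N 1 := fun {c} => LieSubmodule.mem_toSubmodule _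
  have hmemN2 : ∀ {c : L}, c ∈ N2 ↔ c ∈ N 2 := fun {c} => LieSubmodule.mem_toSubmodule _
  have hN2leN1 : N2 ≤ N1 := fun c hc => hmemN1.mpr (hNanti (by omega) (hmemN2.mp hc))
  -- if x and y both lie in the span of a single element plus N 1, contradiction
  have hone : ∀ w : L, x ∈ (Submodule.span F {w} ⊔ N1 : Submodule F L) →
      y ∈ (Submodule.span F {w} ⊔ N1 : Submodule F L) → False := by
    intro w hxw hyw
    apply hcollapse
    have hUclosed : ∀ a ∈ (Submodule.span F {w} ⊔ N1 : Submodule F L),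
        ∀ b ∈ (Submodule.span F {w} ⊔ N1 : Submodule F L), ⁅a, b⁆ ∈ N 2 := by
      intro a ha b hb
      obtain ⟨p, hp, n, hn, rfl⟩ := Submodule.mem_sup.mp ha
      obtain ⟨p', hp', n', hn', rfl⟩ := Submodule.mem_sup.mp hb
      obtain ⟨s, rfl⟩ := Submodule.mem_span_singleton.mp hp
      obtain ⟨s', rfl⟩ := Submodule.mem_span_singleton.mp hp'
      have h1 : ⁅s • w, s' • w⁆ = (0 : L) := by
        rw [lie_smul, smul_lie, lie_self, smul_zero, smul_zero]
      rw [add_lie, lie_add, lie_add, h1, zero_add]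
      exact add_mem (hbrN2 _ (hmemN1.mp hn'))
        (add_mem (hbrN2' (hmemN1.mp hn) _) (hbrN2 _ (hmemN1.mp hn')))
    have hall := subalg _ (fun a ha b hb =>
      Submodule.mem_sup_right (hN2leN1 (hmemN2.mpr (hUclosed a ha b hb)))) hxw hyw
    have hN1eq : N 1 = ⁅(⊤ : LieIdeal F L), (⊤ : LieSubmodule F L L)⁆ := by
      rw [hNs 0, hN0]
    rw [hN1eq]
    exact (LieSubmodule.lie_le_iff _ _ _).mpr (fun z _ v _ => hUclosed z (hall z) v (hall v))
  have hxny : x ∉ (Submodule.span F {y} ⊔ N1 : Submodule F L) := fun hx =>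
    hone y hx (Submodule.mem_sup_left (Submodule.mem_span_singleton_self y))
  have hynx : y ∉ (Submodule.span F {x} ⊔ N1 : Submodule F L) := fun hy =>
    hone x (Submodule.mem_sup_left (Submodule.mem_span_singleton_self x)) hy
  -- everything is spanned by x, y and N 1
  have hVtop : ∀ c : L, c ∈ (Submodule.span F ({x, y} : Set L) ⊔ N1 : Submodule F L) := by
    apply subalg
    · intro a _ b _
      exact Submodule.mem_sup_right (hmemN1.mpr (hbrN1 a b))
    · exact Submodule.mem_sup_left (Submodule.subset_span (by simp))
    · exact Submodule.mem_sup_left (Submodule.subset_span (by simp))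
  have hspanxy : (Submodule.span F ({x, y} : Set L) : Submodule F L)
      = Submodule.span F {x} ⊔ Submodule.span F {y} := by
    rw [show ({x, y} : Set L) = insert x {y} from rfl, Submodule.span_insert]
  -- the coordinate functional f (coefficient of x)
  have hUftop : (Submodule.span F {y} ⊔ N1) ⊔ Submodule.span F {x} = ⊤ := by
    rw [eq_top_iff]
    intro c _
    have h1 := hVtop c
    rw [hspanxy] at h1
    have heq : (Submodule.span F {x} ⊔ Submodule.span F {y}) ⊔ N1
        = (Submodule.span F {y} ⊔ N1) ⊔ Submodule.span F {x} := by
      rw [sup_assoc, sup_comm (Submodule.span F {x})]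
    rwa [heq] at h1
  have hUgtop : (Submodule.span F {x} ⊔ N1) ⊔ Submodule.span F {y} = ⊤ := by
    rw [eq_top_iff]
    intro c _
    have h1 := hVtop c
    rw [hspanxy] at h1
    have heq : (Submodule.span F {x} ⊔ Submodule.span F {y}) ⊔ N1
        = (Submodule.span F {x} ⊔ N1) ⊔ Submodule.span F {y} := by
      rw [sup_assoc, sup_comm (Submodule.span F {y}), ← sup_assoc]
    rwa [heq] at h1
  obtain ⟨f, hfx, hfU, hfdec⟩ := exists_coord (Submodule.span F {y} ⊔ N1) x hxny hUftop
  obtain ⟨g, hgy, hgU, hgdec⟩ := exists_coord (Submodule.span F {x} ⊔ N1) y hynx hUgtop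
  have hfy : f y = 0 := hfU y (Submodule.mem_sup_left (Submodule.mem_span_singleton_self y))
  have hgx : g x = 0 := hgU x (Submodule.mem_sup_left (Submodule.mem_span_singleton_self x))
  have hfN1 : ∀ {c : L}, c ∈ N 1 → f c = 0 := fun {c} hc =>
    hfU c (Submodule.mem_sup_right (hmemN1.mpr hc))
  have hgN1 : ∀ {c : L}, c ∈ N 1 → g c = 0 := fun {c} hc =>
    hgU c (Submodule.mem_sup_right (hmemN1.mpr hc))
  -- the remainder of a after removing x and y coordinates lies in N 1
  have hca : ∀ a : L, a - f a • x - g a • y ∈ N 1 := by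
    intro a
    obtain ⟨p, hp, n, hn, heq⟩ := Submodule.mem_sup.mp (hfdec a)
    obtain ⟨s, rfl⟩ := Submodule.mem_span_singleton.mp hp
    have hgn : g n = 0 := hgU n (Submodule.mem_sup_right hn)
    have hs : s = g a := by
      have h1 := congrArg g heq
      rw [map_sub, map_smul, map_add, map_smul] at h1
      rw [hgx, hgy, hgn] at h1
      simpa using h1
    have h2 : a - f a • x - g a • y = n := by
      rw [← hs, ← heq]
      abel
    rw [h2]
    exact hmemN1.mp hn
  -- bracket decomposition
  have hyx : ⁅y, x⁆ = -q := by
    rw [hqdef, ← lie_skew]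
  have hbr : ∀ a b : L, ∃ n ∈ N 2, ⁅a, b⁆ = (f a * g b - g a * f b) • q + n := by
    intro a b
    have hcaN : a - f a • x - g a • y ∈ N 1 := hca a
    have hcbN : b - f b • x - g b • y ∈ N 1 := hca b
    set ca := a - f a • x - g a • y with hcadef
    set cb := b - f b • x - g b • y with hcbdef
    have ha' : a = f a • x + g a • y + ca := by rw [hcadef]; abel
    have hb' : b = f b • x + g b • y + cb := by rw [hcbdef]; abel
    refine ⟨⁅a, b⁆ - (f a * g b - g a * f b) • q, ?_, by abel⟩
    have hmain : ⁅a, b⁆ - (f a * g b - g a * f b) • q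
        = f a • ⁅x, cb⁆ + g a • ⁅y, cb⁆ + (f b • ⁅ca, x⁆ + g b • ⁅ca, y⁆ + ⁅ca, cb⁆) := by
      have hab : ⁅a, b⁆ = ⁅f a • x + g a • y + ca, f b • x + g b • y + cb⁆ := by
        rw [← ha', ← hb']
      rw [hab]
      simp only [lie_add, add_lie, lie_smul, smul_lie, lie_self, smul_zero, zero_add, add_zero,
        smul_smul, hyx, ← hqdef, smul_neg]
      module
    rw [hmain]
    refine add_mem (add_mem ?_ ?_) (add_mem (add_mem ?_ ?_) ?_)
    · exact SMulMemClass.smul_mem _ (hbrN2 x hcbN)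
    · exact SMulMemClass.smul_mem _ (hbrN2 y hcbN)
    · exact SMulMemClass.smul_mem _ (hbrN2' hcaN x)
    · exact SMulMemClass.smul_mem _ (hbrN2' hcaN y)
    · exact hbrN2 ca hcbN
  -- N 1 is spanned by q and N 2
  let SQL : LieSubmodule F L L :=
    { toSubmodule := Submodule.span F {q} ⊔ N2
      lie_mem := by
        intro z c hc
        have hcN1 : c ∈ N 1 := by
          rcases Submodule.mem_sup.mp hc with ⟨p, hp, n, hn, rfl⟩
          rcases Submodule.mem_span_singleton.mp hp with ⟨t, rfl⟩
          exact add_mem (SMulMemClass.smul_mem t hqN1) (hmemN1.mp (hN2leN1 hn))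
        exact Submodule.mem_sup_right (hmemN2.mpr (hbrN2 z hcN1)) }
  have hN1SQ : ∀ {c : L}, c ∈ N 1 → c ∈ (Submodule.span F {q} ⊔ N2 : Submodule F L) := by
    have hle : N 1 ≤ SQL := by
      have hN1eq : N 1 = ⁅(⊤ : LieIdeal F L), (⊤ : LieSubmodule F L L)⁆ := by rw [hNs 0, hN0]
      rw [hN1eq]
      refine (LieSubmodule.lie_le_iff _ _ _).mpr ?_
      intro z _ v _
      obtain ⟨n, hn, heq⟩ := hbr z v
      show ⁅z, v⁆ ∈ (Submodule.span F {q} ⊔ N2 : Submodule F L)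
      rw [heq]
      exact add_mem (Submodule.mem_sup_left (Submodule.mem_span_singleton.mpr ⟨_, rfl⟩))
        (Submodule.mem_sup_right (hmemN2.mpr hn))
    exact fun {c} hc => hle hc
  -- q is not in N 2
  have hqN2 : q ∉ N 2 := by
    intro h
    apply hcollapse
    intro c hc
    have h1 := hN1SQ hc
    have h2 : (Submodule.span F {q} ⊔ N2 : Submodule F L) ≤ N2 :=
      sup_le ((Submodule.span_singleton_le_iff_mem q N2).mpr (hmemN2.mpr h)) le_rfl
    exact hmemN2.mp (h2 h1)
  -- q is not in span {x, y} + N 2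
  have hqXi : q ∉ (Submodule.span F ({x, y} : Set L) ⊔ N2 : Submodule F L) := by
    intro h
    obtain ⟨p, hp, n, hn, heq⟩ := Submodule.mem_sup.mp h
    obtain ⟨α, β, rfl⟩ := Submodule.mem_span_pair.mp hp
    have hmem : α • x + β • y ∈ N1 := by
      have h3 : α • x + β • y = q - n := by rw [← heq]; abel
      rw [h3]
      exact sub_mem (hmemN1.mpr hqN1) (hN2leN1 hn)
    by_cases hα : α = 0
    · by_cases hβ : β = 0
      · apply hqN2
        have h4 : q = n := by rw [← heq, hα, hβ]; simp
        rw [h4]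
        exact hmemN2.mp hn
      · apply hynx
        have h5 : y = β⁻¹ • (α • x + β • y) := by
          rw [hα, zero_smul, zero_add, smul_smul, inv_mul_cancel₀ hβ, one_smul]
        rw [h5]
        exact Submodule.mem_sup_right (SMulMemClass.smul_mem _ hmem)
    · apply hxny
      have h6 : x = α⁻¹ • (α • x + β • y) - (α⁻¹ * β) • y := by
        rw [smul_add, smul_smul, smul_smul, inv_mul_cancel₀ hα, one_smul]
        abel
      rw [h6]
      exact sub_mem (Submodule.mem_sup_right (SMulMemClass.smul_mem _ hmem))
        (Submodule.mem_sup_left (SMulMemClass.smul_mem _ (Submodule.mem_span_singleton_self y)))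
  -- the functional ξ
  have hUxitop : (Submodule.span F ({x, y} : Set L) ⊔ N2) ⊔ Submodule.span F {q} = ⊤ := by
    rw [eq_top_iff]
    intro c _
    have h1 := hVtop c
    rcases Submodule.mem_sup.mp h1 with ⟨p, hp, n, hn, rfl⟩
    refine add_mem (Submodule.mem_sup_left (Submodule.mem_sup_left hp)) ?_
    have h2 := hN1SQ (hmemN1.mp hn)
    rcases Submodule.mem_sup.mp h2 with ⟨p', hp', n', hn', rfl⟩
    exact add_mem (Submodule.mem_sup_right hp')
      (Submodule.mem_sup_left (Submodule.mem_sup_right hn'))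
  obtain ⟨ξ, hξq, hξU, hξdec⟩ :=
    exists_coord (Submodule.span F ({x, y} : Set L) ⊔ N2) q hqXi hUxitop
  have hξx : ξ x = 0 := hξU x (Submodule.mem_sup_left (Submodule.subset_span (by simp)))
  have hξy : ξ y = 0 := hξU y (Submodule.mem_sup_left (Submodule.subset_span (by simp)))
  have hξN2 : ∀ {c : L}, c ∈ N 2 → ξ c = 0 := fun {c} hc =>
    hξU c (Submodule.mem_sup_right (hmemN2.mpr hc))
  have hkey : ∀ a b : L, ξ ⁅a, b⁆ = f a * g b - g a * f b := by
    intro a b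
    obtain ⟨n, hn, heq⟩ := hbr a b
    rw [heq, map_add, map_smul, hξq, hξN2 hn, smul_eq_mul, mul_one, add_zero]
  -- more derived facts
  have hfq : f q = 0 := hfN1 hqN1
  have hgq : g q = 0 := hgN1 hqN1
  have hsk : ∀ v w : L, ⁅w, v⁆ = -⁅v, w⁆ := fun v w => by rw [← lie_skew]
  have hdecompL : ∀ z w : L,
      ⁅z, w⁆ = f z • ⁅x, w⁆ + g z • ⁅y, w⁆ + ⁅z - f z • x - g z • y, w⁆ := by
    intro z w
    rw [sub_lie, sub_lie, smul_lie, smul_lie]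
    abel
  have hdecompR : ∀ v w : L,
      ⁅v, w⁆ = f w • ⁅v, x⁆ + g w • ⁅v, y⁆ + ⁅v, w - f w • x - g w • y⁆ := by
    intro v w
    rw [lie_sub, lie_sub, lie_smul, lie_smul]
    abel
  have hum1' : ∀ {c : L}, c ∈ N 1 → ∀ {u : L}, u ∈ N (m - 1) → ⁅c, u⁆ = 0 := by
    intro c hc u hu
    apply hbot
    have h1 := brk 1 c hc (m - 1) u hu
    rwa [show 1 + (m - 1) + 1 = m + 1 by omega] at h1
  have hNmly : ∀ v ∈ N (m - 1), ∀ z : L, ⁅v, z⁆ ∈ N m := by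
    intro v hv z
    have h1 := brk (m - 1) v hv 0 z (by rw [hN0]; trivial)
    rwa [show m - 1 + 0 + 1 = m by omega] at h1
  -- choice of u1, u2
  have huex : ∃ u ∈ N (m - 1), ⁅u, x⁆ ≠ 0 ∨ ⁅u, y⁆ ≠ 0 := by
    by_contra hcon
    push_neg at hcon
    apply hNmne
    have hle : N m ≤ (⊥ : LieSubmodule F L L) := by
      rw [show m = m - 1 + 1 by omega, hNs (m - 1)]
      refine (LieSubmodule.lie_le_iff _ _ _).mpr ?_
      intro z _ w hw
      have h1 : ⁅x, w⁆ = 0 := by rw [hsk, (hcon w hw).1, neg_zero]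
      have h2 : ⁅y, w⁆ = 0 := by rw [hsk, (hcon w hw).2, neg_zero]
      have h3 : ⁅z - f z • x - g z • y, w⁆ = 0 := hum1' (hca z) hw
      rw [hdecompL z w, h1, h2, h3, smul_zero, smul_zero, add_zero, add_zero]
      exact (LieSubmodule.mem_bot 0).mpr rfl
    exact le_bot_iff.mp hle
  obtain ⟨u, huN, hune⟩ := huex
  obtain ⟨u1, u2, hu1N, hu2N, h12, hw0ne, hinjD⟩ :
      ∃ u1 u2 : L, u1 ∈ N (m - 1) ∧ u2 ∈ N (m - 1) ∧ ⁅u1, u2⁆ = 0 ∧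
        (⁅u1, y⁆ - ⁅u2, x⁆ ≠ 0) ∧
        (∀ a : L, a + (f a • u1 + g a • u2 + ξ a • (⁅u1, y⁆ - ⁅u2, x⁆)) = 0 → a = 0) := by
    rcases eq_or_lt_of_le hm1 with hm1' | hm2
    · -- m = 1
      have hyN0 : y ∈ N (m - 1) := by rw [show m - 1 = 0 by omega, hN0]; trivial
      refine ⟨0, y, by rw [show m - 1 = 0 by omega, hN0]; trivial, hyN0, by simp, ?_, ?_⟩
      · rw [zero_lie, hyx, zero_sub, neg_neg]
        exact hq0
      · intro a ha
        rw [zero_lie, hyx, zero_sub, neg_neg, smul_zero, zero_add] at ha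
        -- ha : a + (g a • y + ξ a • q) = 0
        have hga : g a = 0 := by
          have h1 := congrArg g ha
          rw [map_add, map_add, map_smul, map_smul, smul_eq_mul, smul_eq_mul, hgy, hgq,
            mul_one, mul_zero, add_zero, map_zero] at h1
          have h2 : (2 : F) * g a = 0 := by rw [two_mul]; exact h1
          rcases mul_eq_zero.mp h2 with h | h
          · exact absurd h two_ne_zero
          · exact h
        have hξa : ξ a = 0 := by
          have h1 := congrArg ξ ha
          rw [map_add, map_add, map_smul, map_smul, smul_eq_mul, smul_eq_mul, hξy, hξq,
            mul_one, mul_zero, zero_add, map_zero] at h1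
          have h2 : (2 : F) * ξ a = 0 := by rw [two_mul]; exact h1
          rcases mul_eq_zero.mp h2 with h | h
          · exact absurd h two_ne_zero
          · exact h
        rw [hga, hξa, zero_smul, zero_smul, add_zero, add_zero] at ha
        exact ha
    · -- 2 ≤ m
      have injlem : ∀ v1 v2 : L, v1 ∈ N (m - 1) → v2 ∈ N (m - 1) →
          ∀ a : L, a + (f a • v1 + g a • v2 + ξ a • (⁅v1, y⁆ - ⁅v2, x⁆)) = 0 → a = 0 := by
        intro v1 v2 h1 h2 a ha
        have hw0m' : ⁅v1, y⁆ - ⁅v2, x⁆ ∈ N m := sub_mem (hNmly v1 h1 y) (hNmly v2 h2 x)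
        set w' : L := ⁅v1, y⁆ - ⁅v2, x⁆ with hw'
        set Da : L := f a • v1 + g a • v2 + ξ a • w' with hDa
        have hDaN : Da ∈ N (m - 1) :=
          add_mem (add_mem (SMulMemClass.smul_mem _ h1) (SMulMemClass.smul_mem _ h2))
            (SMulMemClass.smul_mem _ (hNanti (by omega) hw0m'))
        have hDaN1 : Da ∈ N 1 := hNanti (by omega) hDaN
        have haa : a = -Da := eq_neg_of_add_eq_zero_left ha
        have hfa : f a = 0 := by rw [haa, map_neg, hfN1 hDaN1, neg_zero]
        have hga : g a = 0 := by rw [haa, map_neg, hgN1 hDaN1, neg_zero]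
        have hDa2 : Da = ξ a • w' := by rw [hDa, hfa, hga, zero_smul, zero_smul,
          zero_add, zero_add]
        have hξw' : ξ w' = 0 := hξN2 (hNanti (by omega) hw0m')
        have hξa : ξ a = 0 := by
          have h3 := congrArg ξ haa
          rw [map_neg, hDa2, map_smul, smul_eq_mul, hξw', mul_zero, neg_zero] at h3
          exact h3
        rw [haa, hDa2, hξa, zero_smul, neg_zero]
      by_cases huy : ⁅u, y⁆ = 0
      · -- then ⁅u, x⁆ ≠ 0
        have hux : ⁅u, x⁆ ≠ 0 := by
          rcases hune with h | h
          · exact h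
          · exact absurd huy h
        have h0N : (0 : L) ∈ N (m - 1) := zero_mem _
        refine ⟨0, u, h0N, huN, by rw [zero_lie], ?_, injlem 0 u h0N huN⟩
        rw [zero_lie, zero_sub, neg_ne_zero]
        exact hux
      · have h0N : (0 : L) ∈ N (m - 1) := zero_mem _
        refine ⟨u, 0, huN, h0N, by rw [lie_zero], ?_, injlem u 0 huN h0N⟩
        rw [zero_lie, sub_zero]
        exact huy
  set w0 : L := ⁅u1, y⁆ - ⁅u2, x⁆ with hw0def
  have hw0m : w0 ∈ N m := sub_mem (hNmly u1 hu1N y) (hNmly u2 hu2N x)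
  have hw0N1 : w0 ∈ N 1 := hNanti hm1 hw0m
  -- the derivation D
  set D : L →ₗ[F] L := f.smulRight u1 + g.smulRight u2 + ξ.smulRight w0 with hDdef
  have hDapp : ∀ a : L, D a = f a • u1 + g a • u2 + ξ a • w0 := fun a => rfl
  have hder : ∀ a b : L, D ⁅a, b⁆ = ⁅D a, b⁆ + ⁅a, D b⁆ := by
    intro a b
    have e3 : ∀ v : L, v ∈ N (m - 1) → ∀ w : L, ⁅v, w⁆ = f w • ⁅v, x⁆ + g w • ⁅v, y⁆ := by
      intro v hv w
      rw [hdecompR v w, hum1 hv (hca w), add_zero]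
    have hLHS : D ⁅a, b⁆ = (f a * g b - g a * f b) • w0 := by
      rw [hDapp, hfN1 (hbrN1 a b), hgN1 (hbrN1 a b), hkey a b, zero_smul, zero_smul,
        zero_add, zero_add]
    rw [hLHS, hDapp, hDapp]
    rw [add_lie, add_lie, lie_add, lie_add, smul_lie, smul_lie, smul_lie,
      lie_smul, lie_smul, lie_smul, hcent' hw0m b, hcent hw0m a, smul_zero, smul_zero,
      add_zero, add_zero]
    rw [e3 u1 hu1N b, e3 u2 hu2N b, hsk u1 a, hsk u2 a, e3 u1 hu1N a, e3 u2 hu2N a, hw0def]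
    module
  have h21 : ⁅u2, u1⁆ = 0 := by rw [hsk, h12, neg_zero]
  have hcomm : ∀ a b : L, ⁅D a, D b⁆ = 0 := by
    intro a b
    rw [hDapp, hDapp]
    simp only [lie_add, add_lie, lie_smul, smul_lie, lie_self, h12, h21,
      hcent hw0m, hcent' hw0m, smul_zero, add_zero, zero_add]
  obtain ⟨φD, hφD⟩ := exists_aut D hder hcomm (fun a ha => hinjD a ha)
  -- rank one automorphisms
  have aut1 : ∀ η : L →ₗ[F] F, (∀ {c : L}, c ∈ N 1 → η c = 0) →
      ∃ φ : L ≃ₗ⁅F⁆ L, ∀ b : L, φ b = b + η b • w0 := by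
    intro η hη
    have c1 : ∀ a b : L, (η.smulRight w0) ⁅a, b⁆ = ⁅(η.smulRight w0) a, b⁆ + ⁅a, (η.smulRight w0) b⁆ := by
      intro a b
      show η ⁅a, b⁆ • w0 = ⁅η a • w0, b⁆ + ⁅a, η b • w0⁆
      rw [hη (hbrN1 a b), zero_smul, smul_lie, lie_smul, hcent' hw0m b, hcent hw0m a,
        smul_zero, smul_zero, add_zero]
    have c2 : ∀ a b : L, ⁅(η.smulRight w0) a, (η.smulRight w0) b⁆ = 0 := by
      intro a b
      show ⁅η a • w0, η b • w0⁆ = 0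
      rw [smul_lie, lie_smul, hcent hw0m w0, smul_zero, smul_zero]
    have c3 : ∀ a : L, a + (η.smulRight w0) a = 0 → a = 0 := by
      intro a ha
      have hηw0 : η w0 = 0 := hη hw0N1
      have h1 := congrArg η ha
      rw [map_zero, map_add] at h1
      have h4 : η ((η.smulRight w0) a) = η a * η w0 := by
        show η (η a • w0) = η a * η w0
        rw [map_smul, smul_eq_mul]
      rw [h4, hηw0, mul_zero, add_zero] at h1
      have h3 : (η.smulRight w0) a = 0 := by
        show η a • w0 = 0
        rw [h1, zero_smul]
      rw [h3, add_zero] at ha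
      exact ha
    obtain ⟨φ, hφ⟩ := exists_aut (η.smulRight w0) c1 c2 c3
    exact ⟨φ, fun b => by rw [hφ]; rfl⟩
  -- the local automorphism T
  set T : L →ₗ[F] L := LinearMap.id + ξ.smulRight w0 with hTdef
  have hTapp : ∀ a : L, T a = a + ξ a • w0 := fun a => rfl
  refine ⟨T, ?_, ?_⟩
  · intro a
    by_cases hfa : f a = 0
    · by_cases hga : g a = 0
      · refine ⟨φD, ?_⟩
        rw [hTapp, hφD, hDapp, hfa, hga, zero_smul, zero_smul, zero_add, zero_add]
      · obtain ⟨φ, hφ⟩ := aut1 ((ξ a / g a) • g) (fun {c} hc => by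
          rw [LinearMap.smul_apply, hgN1 hc, smul_eq_mul, mul_zero])
        refine ⟨φ, ?_⟩
        rw [hTapp, hφ, LinearMap.smul_apply, smul_eq_mul, div_mul_cancel₀ _ hga]
    · obtain ⟨φ, hφ⟩ := aut1 ((ξ a / f a) • f) (fun {c} hc => by
        rw [LinearMap.smul_apply, hfN1 hc, smul_eq_mul, mul_zero])
      refine ⟨φ, ?_⟩
      rw [hTapp, hφ, LinearMap.smul_apply, smul_eq_mul, div_mul_cancel₀ _ hfa]
  · rintro ⟨-, hmul⟩
    have h1 := hmul x y
    have e1 : T ⁅x, y⁆ = q + w0 := by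
      rw [hTapp, ← hqdef, hξq, one_smul]
    have e2 : ⁅T x, T y⁆ = q := by
      rw [hTapp, hTapp, hξx, hξy, zero_smul, add_zero, add_zero, ← hqdef]
    rw [e1, e2] at h1
    exact hw0ne (by rwa [add_eq_left] at h1)
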